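/- arXiv:1109.2539 — 3 statements merged into one kernel-verified Lean document; each statement's English description precedes it below -/
import Mathlib

section
/- Define p_{k,N}(a,b,c) = C_N(a,b,c) · (2a)_k (a+1)_k (a+b)_k (a+c)_k (-N)_k / [k! (a)_k (a-b+1)_k (a-c+1)_k (2a+N+1)_k], where C_N(a,b,c) = (a-b+1)_N (a-c+1)_N / [(2a+1)_N (-b-c+1)_N]. Then for all integers 0 ≤ j ≤ k ≤ N and reals a,b,c,δ for which all expressions are defined, p_{j,k}(a,b,a+k+2δ) · p_{k,N}(a+δ,b+δ,c) = p_{j,N}(a,b,c+δ) · p_{k-j,N-j}(a+j+δ, -a-j+δ, c). -/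
/-- Pochhammer symbol `(a)_k = a(a+1)⋯(a+k-1)`. -/
noncomputable def poch (a : ℝ) (k : ℕ) : ℝ := ∏ i ∈ Finset.range k, (a + i)

/-- Normalizing constant `C_N(a,b,c)` of Wilson's 6-j weights. -/
noncomputable def wC (N : ℕ) (a b c : ℝ) : ℝ :=
  poch (a - b + 1) N * poch (a - c + 1) N / (poch (2*a + 1) N * poch (-b - c + 1) N)

/-- Wilson's 6-j weight `p_{k,N}(a,b,c)`. -/
noncomputable def wp (k N : ℕ) (a b c : ℝ) : ℝ :=
  wC N a b c *
    (poch (2*a) k * poch (a + 1) k * poch (a + b) k * poch (a + c) k * poch (-(N : ℝ)) k /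
      ((k.factorial : ℝ) * poch a k * poch (a - b + 1) k * poch (a - c + 1) k *
        poch (2*a + N + 1) k))

/-- The product of all Pochhammer factors appearing in denominators of `wp k N a b c`. -/
noncomputable def wpden (k N : ℕ) (a b c : ℝ) : ℝ :=
  poch (2*a + 1) N * poch (-b - c + 1) N * poch a k * poch (a - b + 1) k *
    poch (a - c + 1) k * poch (2*a + N + 1) k

lemma poch_succ (x : ℝ) (n : ℕ) : poch x (n+1) = poch x n * (x + n) := by
  unfold poch; rw [Finset.prod_range_succ]

lemma poch_succ' (x : ℝ) (n : ℕ) : poch x (n+1) = x * poch (x+1) n := by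
  unfold poch
  rw [Finset.prod_range_succ']
  simp only [Nat.cast_zero, add_zero]
  rw [mul_comm]
  congr 1
  apply Finset.prod_congr rfl
  intro i _
  push_cast; ring

lemma poch_add (x : ℝ) (m n : ℕ) : poch x (m+n) = poch x m * poch (x+m) n := by
  unfold poch
  rw [Finset.prod_range_add]
  congr 1
  apply Finset.prod_congr rfl
  intro i _
  push_cast; ring

lemma poch_reflect (x : ℝ) (n : ℕ) : poch (1 - x - n) n = (-1)^n * poch x n := by
  induction n with
  | zero => simp [poch]
  | succ n ih =>
    have h1 : (1:ℝ) - x - ((n+1:ℕ):ℝ) + 1 = 1 - x - n := by push_cast; ring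
    rw [poch_succ', h1, ih, poch_succ]
    push_cast; ring

lemma poch_one (n : ℕ) : poch 1 n = n.factorial := by
  induction n with
  | zero => simp [poch]
  | succ n ih => rw [poch_succ, ih]; push_cast [Nat.factorial_succ]; ring

lemma pswap (z : ℝ) (s t : ℕ) : poch z s * poch (z+(s:ℝ)) t = poch z t * poch (z+(t:ℝ)) s := by
  rw [← poch_add, ← poch_add, Nat.add_comm s t]

lemma preflect' (x y : ℝ) (n : ℕ) (h : y = 1 - x - n) : poch x n = (-1)^n * poch y n := by
  subst h
  rw [poch_reflect, ← mul_assoc, ← pow_add, Even.neg_one_pow ⟨n, rfl⟩, one_mul]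

lemma pt2 (x y : ℝ) (j m : ℕ) (h : x + (j:ℝ) = 1 - y - m) :
    poch x (j+m) = poch x j * ((-1)^m * poch y m) := by
  rw [poch_add, h, poch_reflect]

lemma pt7 (j m q : ℕ) :
    poch (-(j:ℝ)-(m:ℝ)) j * poch (-(j:ℝ)-(m:ℝ)-(q:ℝ)) (j+m) * ((m.factorial : ℝ))
      = (-1)^j * (poch (-(j:ℝ)-(m:ℝ)-(q:ℝ)) j * poch (-(m:ℝ)-(q:ℝ)) m * (((j+m).factorial : ℝ))) := by
  have r1 : poch (-(j:ℝ)-(m:ℝ)) j = (-1)^j * poch ((m:ℝ)+1) j :=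
    preflect' _ _ j (by push_cast; ring)
  have r2 : poch (-(j:ℝ)-(m:ℝ)-(q:ℝ)) (j+m) = (-1)^(j+m) * poch ((q:ℝ)+1) (j+m) :=
    preflect' _ _ _ (by push_cast; ring)
  have r3 : poch (-(j:ℝ)-(m:ℝ)-(q:ℝ)) j = (-1)^j * poch ((m:ℝ)+(q:ℝ)+1) j :=
    preflect' _ _ _ (by push_cast; ring)
  have r4 : poch (-(m:ℝ)-(q:ℝ)) m = (-1)^m * poch ((q:ℝ)+1) m :=
    preflect' _ _ _ (by push_cast; ring)
  have s : poch ((q:ℝ)+1) (j+m) = poch ((q:ℝ)+1) m * poch ((q:ℝ)+1+(m:ℝ)) j := by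
    rw [Nat.add_comm, poch_add]
  have f1 : (((j+m).factorial : ℕ) : ℝ) = poch 1 m * poch (1+(m:ℝ)) j := by
    rw [← poch_one, Nat.add_comm, poch_add]
  have f2 : ((m.factorial : ℕ) : ℝ) = poch 1 m := (poch_one m).symm
  rw [r1, r2, r3, r4, s, f1, f2]
  ring_nf

lemma pdup (v : ℝ) (n : ℕ) :
    poch (v+1) n * poch (2*v) (n+n) = poch v n * poch (2*v+1) (n+n) := by
  induction n with
  | zero => simp [poch]
  | succ n ih =>
    have l : (n+1)+(n+1) = ((n+n)+1)+1 := by omega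
    rw [l]
    simp only [poch_succ]
    linear_combination (norm := (push_cast; ring_nf))
      ((v+(n:ℝ)+1)*(2*v+2*(n:ℝ))*(2*v+2*(n:ℝ)+1)) * ih

lemma pt4 (x : ℝ) (j m q : ℕ) :
    poch x (j+(m+q)) * poch (x+(j:ℝ)) m = poch x (j+m) * poch (x+(j:ℝ)) (m+q) := by
  simp only [poch_add]
  ring_nf

lemma pt8 (y : ℝ) (j m q : ℕ) :
    poch y (j+(m+q)) * poch (y+(j:ℝ)+(m:ℝ)+(q:ℝ)) j * poch (y+2*(j:ℝ)) m
      = poch y (j+m) * poch (y+(j:ℝ)+(m:ℝ)) j * poch (y+2*(j:ℝ)) (m+q) := by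
  simp only [poch_add]
  linear_combination (norm := (push_cast; ring_nf))
    (poch y j * poch (y+(j:ℝ)) m * poch (y+2*(j:ℝ)) m) * pswap (y+(j:ℝ)+(m:ℝ)) q j

lemma pt9 (v : ℝ) (j m q : ℕ) :
    poch (2*v+(j:ℝ)+(m:ℝ)) j * poch (2*v) (j+m) * poch (v+1) (j+m) *
      poch (2*v+2*(j:ℝ)+1) (m+q) * poch (v+(j:ℝ)) m * poch (2*v+2*(j:ℝ)+(m:ℝ)+(q:ℝ)+1) m
    = poch (2*v+2*(j:ℝ)) m * poch (v+(j:ℝ)+1) m * poch v (j+m) *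
      poch (2*v+1) (j+(m+q)) * poch (2*v+(j:ℝ)+(m:ℝ)+(q:ℝ)+1) (j+m) := by
  have sA := pswap (2*v+(j:ℝ)) m j
  have s1 := pswap (2*v+1+(j:ℝ)) (m+q) j
  simp only [poch_add] at s1
  have d := pdup v j
  simp only [poch_add] at d
  simp only [poch_add]
  linear_combination (norm := (push_cast; ring_nf))
    (poch (2*v) j * poch (v+1) j * poch (v+1+(j:ℝ)) m * poch (2*v+2*(j:ℝ)+1) m *
      poch (2*v+2*(j:ℝ)+1+(m:ℝ)) q * poch (v+(j:ℝ)) m * poch (2*v+2*(j:ℝ)+(m:ℝ)+(q:ℝ)+1) m) * sA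
    + (poch (v+1+(j:ℝ)) m * poch (2*v+2*(j:ℝ)+1) m * poch (2*v+2*(j:ℝ)+1+(m:ℝ)) q *
      poch (v+(j:ℝ)) m * poch (2*v+2*(j:ℝ)+(m:ℝ)+(q:ℝ)+1) m * poch (2*v+2*(j:ℝ)) m) * d
    - (poch (v+1+(j:ℝ)) m * poch (v+(j:ℝ)) m * poch (2*v+2*(j:ℝ)) m * poch v j *
      poch (2*v+1) j * poch (2*v+2*(j:ℝ)+(m:ℝ)+(q:ℝ)+1) m) * s1

theorem wilson_product_identity (j k N : ℕ) (a b c δ : ℝ)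
    (hjk : j ≤ k) (hkN : k ≤ N)
    (h1 : wpden j k a b (a + k + 2*δ) ≠ 0)
    (h2 : wpden k N (a + δ) (b + δ) c ≠ 0)
    (h3 : wpden j N a b (c + δ) ≠ 0)
    (h4 : wpden (k - j) (N - j) (a + j + δ) (-a - j + δ) c ≠ 0) :
    wp j k a b (a + k + 2*δ) * wp k N (a + δ) (b + δ) c
      = wp j N a b (c + δ) * wp (k - j) (N - j) (a + j + δ) (-a - j + δ) c := by
  obtain ⟨m, rfl⟩ := Nat.exists_eq_add_of_le hjk
  obtain ⟨q, rfl⟩ := Nat.exists_eq_add_of_le hkN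
  simp only [Nat.add_assoc, Nat.add_sub_cancel_left] at h1 h2 h3 h4 ⊢
  simp only [wpden, mul_ne_zero_iff] at h1 h2 h3 h4
  obtain ⟨⟨⟨⟨⟨h1a,h1b⟩,h1c⟩,h1d⟩,h1e⟩,h1f⟩ := h1
  obtain ⟨⟨⟨⟨⟨h2a,h2b⟩,h2c⟩,h2d⟩,h2e⟩,h2f⟩ := h2
  obtain ⟨⟨⟨⟨⟨h3a,h3b⟩,h3c⟩,h3d⟩,h3e⟩,h3f⟩ := h3
  obtain ⟨⟨⟨⟨⟨h4a,h4b⟩,h4c⟩,h4d⟩,h4e⟩,h4f⟩ := h4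
  simp only [wp, wC, div_mul_div_comm]
  refine (div_eq_div_iff ?_ ?_).mpr ?_
  · apply_rules [mul_ne_zero] <;>
      first
      | assumption
      | exact Nat.cast_ne_zero.mpr (Nat.factorial_ne_zero _)
  · apply_rules [mul_ne_zero] <;>
      first
      | assumption
      | exact Nat.cast_ne_zero.mpr (Nat.factorial_ne_zero _)
  have i2 : poch (1-(j:ℝ)-(m:ℝ)-2*δ) (j+m)
      = poch (1-(j:ℝ)-(m:ℝ)-2*δ) j * ((-1)^m * poch (2*δ) m) :=
    pt2 _ _ j m (by push_cast; ring)
  have i3 : poch (a+b+2*δ) (j+m)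
      = (-1)^(j+m) * poch (1-a-b-2*δ-(j:ℝ)-(m:ℝ)) (j+m) :=
    preflect' _ _ _ (by push_cast; ring)
  have e237 : poch (1-(j:ℝ)-(m:ℝ)-2*δ) (j+m) * poch (a+b+2*δ) (j+m) *
        (poch (-(j:ℝ)-(m:ℝ)) j * poch (-(j:ℝ)-(m:ℝ)-(q:ℝ)) (j+m) * ((m.factorial : ℝ)))
      = poch (1-(j:ℝ)-(m:ℝ)-2*δ) j * poch (2*δ) m *
          poch (1-a-b-2*δ-(j:ℝ)-(m:ℝ)) (j+m) *
          (poch (-(j:ℝ)-(m:ℝ)-(q:ℝ)) j * poch (-(m:ℝ)-(q:ℝ)) m * (((j+m).factorial : ℝ))) := by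
    rw [i2, i3, pt7]
    ring_nf
    simp [pow_add, pow_mul', neg_one_sq, one_pow]
  have e4 := pt4 (a+δ-c+1) j m q
  have e5 : poch (a-c-δ+1) j * poch (a-c-δ+1+(j:ℝ)) (m+q) = poch (a-c-δ+1) (j+(m+q)) :=
    (poch_add _ j (m+q)).symm
  have e6 : poch (a+δ+c) (j+m) = poch (a+δ+c) j * poch (a+δ+c+(j:ℝ)) m := poch_add _ j m
  have e8 := pt8 (2*a+1) j m q
  have e9 := pt9 (a+δ) j m q
  have main :
      (poch (1-(j:ℝ)-(m:ℝ)-2*δ) (j+m) * poch (a+b+2*δ) (j+m) *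
        (poch (-(j:ℝ)-(m:ℝ)) j * poch (-(j:ℝ)-(m:ℝ)-(q:ℝ)) (j+m) * ((m.factorial : ℝ)))) *
      ((poch (a+δ-c+1) (j+(m+q)) * poch (a+δ-c+1+(j:ℝ)) m) *
      ((poch (a-c-δ+1) j * poch (a-c-δ+1+(j:ℝ)) (m+q)) *
      ((poch (a+δ+c) (j+m)) *
      ((poch (2*a+1) (j+(m+q)) * poch (2*a+1+(j:ℝ)+(m:ℝ)+(q:ℝ)) j * poch (2*a+1+2*(j:ℝ)) m) *
      (poch (2*(a+δ)+(j:ℝ)+(m:ℝ)) j * poch (2*(a+δ)) (j+m) * poch (a+δ+1) (j+m) *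
        poch (2*(a+δ)+2*(j:ℝ)+1) (m+q) * poch (a+δ+(j:ℝ)) m *
        poch (2*(a+δ)+2*(j:ℝ)+(m:ℝ)+(q:ℝ)+1) m)))))
      =
      (poch (1-(j:ℝ)-(m:ℝ)-2*δ) j * poch (2*δ) m *
          poch (1-a-b-2*δ-(j:ℝ)-(m:ℝ)) (j+m) *
          (poch (-(j:ℝ)-(m:ℝ)-(q:ℝ)) j * poch (-(m:ℝ)-(q:ℝ)) m * (((j+m).factorial : ℝ)))) *
      ((poch (a+δ-c+1) (j+m) * poch (a+δ-c+1+(j:ℝ)) (m+q)) *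
      ((poch (a-c-δ+1) (j+(m+q))) *
      ((poch (a+δ+c) j * poch (a+δ+c+(j:ℝ)) m) *
      ((poch (2*a+1) (j+m) * poch (2*a+1+(j:ℝ)+(m:ℝ)) j * poch (2*a+1+2*(j:ℝ)) (m+q)) *
      (poch (2*(a+δ)+2*(j:ℝ)) m * poch (a+δ+(j:ℝ)+1) m * poch (a+δ) (j+m) *
        poch (2*(a+δ)+1) (j+(m+q)) * poch (2*(a+δ)+(j:ℝ)+(m:ℝ)+(q:ℝ)+1) (j+m)))))) := by
    rw [e237, e4, e5, e6, e8, e9]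
  linear_combination (norm := (push_cast; ring_nf))
    (poch (a-b+1) (j+m) * poch (2*a) j * poch (a+1) j * poch (a+b) j *
      poch (a-b+1) (j+(m+q)) * poch (1-b-c-δ) (j+(m+q)) * ((j.factorial : ℝ)) *
      poch a j * poch (a-b+1) j) * main
end

section
/- Under the admissibility conditions a > -1/2, -a < b < a+1, and (c > a+N or c < -a-N+1), the weights p_{k,N}(a,b,c) are nonnegative for all 0 ≤ k ≤ N; in particular ν = Σ_{k=0}^N p_{k,N}(a,b,c) δ_k is a probability measure on {0,...,N} (given that the weights sum to 1). -/
private lemma my_div_nonneg {x y : ℝ} (h : 0 ≤ x * y) : 0 ≤ x / y := by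
  rcases eq_or_ne y 0 with hy | hy
  · simp [hy]
  · have : x / y = x * y / (y * y) := by
      rw [mul_div_mul_right _ _ hy]
    rw [this]
    exact div_nonneg h (mul_self_nonneg y)

private lemma my_poch_pos {x : ℝ} (hx : 0 < x) (k : ℕ) : 0 < poch x k := by
  unfold poch
  exact Finset.prod_pos fun i _ => add_pos_of_pos_of_nonneg hx (Nat.cast_nonneg i)

private lemma my_poch_pair {x y : ℝ} {k : ℕ}
    (h : ∀ i : ℕ, i < k → 0 ≤ (x + i) * (y + i)) : 0 ≤ poch x k * poch y k := by
  unfold poch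
  rw [← Finset.prod_mul_distrib]
  exact Finset.prod_nonneg fun i hi => h i (Finset.mem_range.mp hi)

private lemma my_pair2a {a : ℝ} (ha : a > -1/2) (k : ℕ) :
    0 ≤ poch (2*a) k * poch a k := by
  apply my_poch_pair
  intro i _
  rcases Nat.eq_zero_or_pos i with h0 | h0
  · subst h0; push_cast; nlinarith [sq_nonneg a]
  · have hi1 : (1 : ℝ) ≤ (i : ℝ) := by exact_mod_cast h0
    nlinarith

theorem wilson_weights_probability (N : ℕ) (a b c : ℝ) (hN : 1 ≤ N)
    (ha : a > -1/2) (hb1 : -a < b) (hb2 : b < a + 1)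
    (hc : c > a + N ∨ c < -a - N + 1)
    (hsum : ∑ k ∈ Finset.range (N + 1), wp k N a b c = 1) :
    (∀ k ≤ N, 0 ≤ wp k N a b c) ∧
      ∑ k ∈ Finset.range (N + 1), wp k N a b c = 1 := by
  refine ⟨fun k hk => ?_, hsum⟩
  have hN1 : (1 : ℝ) ≤ (N : ℝ) := by exact_mod_cast hN
  have hfact : (0 : ℝ) < (k.factorial : ℝ) := by positivity
  -- common positive pochhammers
  have hab1 : (0:ℝ) < a - b + 1 := by linarith
  have hApb : (0:ℝ) < a + b := by linarith
  have h2a1 : (0:ℝ) < 2*a + 1 := by linarith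
  have h2aN1 : (0:ℝ) < 2*a + N + 1 := by linarith
  have hA1 : (0:ℝ) < a + 1 := by linarith
  have Hab1N := my_poch_pos hab1 N
  have H2a1N := my_poch_pos h2a1 N
  have Hab1k := my_poch_pos hab1 k
  have H2aN1k := my_poch_pos h2aN1 k
  have HA1k := my_poch_pos hA1 k
  have HApbk := my_poch_pos hApb k
  have Hpair2a := my_pair2a ha k
  unfold wp wC
  rcases hc with hc | hc
  · -- c > a + N
    have hCnum : 0 ≤ poch (a - b + 1) N * poch (a - c + 1) N *
        (poch (2*a + 1) N * poch (-b - c + 1) N) := by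
      have hpair : 0 ≤ poch (a - c + 1) N * poch (-b - c + 1) N := by
        apply my_poch_pair
        intro i hi
        have hi1 : (i : ℝ) + 1 ≤ N := by exact_mod_cast Nat.succ_le_of_lt hi
        have h1 : a - c + 1 + i < 0 := by linarith
        have h2 : -b - c + 1 + i < 0 := by linarith
        exact (mul_pos_of_neg_of_neg h1 h2).le
      have e : poch (a - b + 1) N * poch (a - c + 1) N *
          (poch (2*a + 1) N * poch (-b - c + 1) N)
          = (poch (a - b + 1) N * poch (2*a + 1) N) *
            (poch (a - c + 1) N * poch (-b - c + 1) N) := by ring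
      rw [e]
      exact mul_nonneg (mul_nonneg Hab1N.le H2a1N.le) hpair
    have hapc : (0:ℝ) < a + c := by linarith
    have HApck := my_poch_pos hapc k
    have hpairNc : 0 ≤ poch (-(N:ℝ)) k * poch (a - c + 1) k := by
      apply my_poch_pair
      intro i hi
      have hi1 : (i : ℝ) + 1 ≤ N := by
        exact_mod_cast Nat.succ_le_of_lt (lt_of_lt_of_le hi hk)
      have h1 : -(N:ℝ) + i < 0 := by linarith
      have h2 : a - c + 1 + i < 0 := by linarith
      exact (mul_pos_of_neg_of_neg h1 h2).le
    have hEnum : 0 ≤ (poch (2*a) k * poch (a + 1) k * poch (a + b) k * poch (a + c) k *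
          poch (-(N : ℝ)) k) *
        ((k.factorial : ℝ) * poch a k * poch (a - b + 1) k * poch (a - c + 1) k *
          poch (2*a + N + 1) k) := by
      have e : (poch (2*a) k * poch (a + 1) k * poch (a + b) k * poch (a + c) k *
            poch (-(N : ℝ)) k) *
          ((k.factorial : ℝ) * poch a k * poch (a - b + 1) k * poch (a - c + 1) k *
            poch (2*a + N + 1) k)
          = (poch (2*a) k * poch a k) * (poch (-(N:ℝ)) k * poch (a - c + 1) k) *
            (poch (a + 1) k * poch (a + b) k * poch (a + c) k * (k.factorial : ℝ) *
              poch (a - b + 1) k * poch (2*a + N + 1) k) := by ring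
      rw [e]
      have hpos : 0 ≤ poch (a + 1) k * poch (a + b) k * poch (a + c) k * (k.factorial : ℝ) *
          poch (a - b + 1) k * poch (2*a + N + 1) k := by positivity
      exact mul_nonneg (mul_nonneg Hpair2a hpairNc) hpos
    exact mul_nonneg (my_div_nonneg hCnum) (my_div_nonneg hEnum)
  · -- c < -a - N + 1
    have hacN : (0:ℝ) < a - c + 1 := by linarith
    have hbcN : (0:ℝ) < -b - c + 1 := by linarith
    have Hac1N := my_poch_pos hacN N
    have Hbc1N := my_poch_pos hbcN N
    have Hac1k := my_poch_pos hacN k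
    have hCnum : 0 ≤ poch (a - b + 1) N * poch (a - c + 1) N *
        (poch (2*a + 1) N * poch (-b - c + 1) N) := by positivity
    have hpairNc : 0 ≤ poch (a + c) k * poch (-(N:ℝ)) k := by
      apply my_poch_pair
      intro i hi
      have hi1 : (i : ℝ) + 1 ≤ N := by
        exact_mod_cast Nat.succ_le_of_lt (lt_of_lt_of_le hi hk)
      have h1 : a + c + i < 0 := by linarith
      have h2 : -(N:ℝ) + i < 0 := by linarith
      exact (mul_pos_of_neg_of_neg h1 h2).le
    have hEnum : 0 ≤ (poch (2*a) k * poch (a + 1) k * poch (a + b) k * poch (a + c) k *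
          poch (-(N : ℝ)) k) *
        ((k.factorial : ℝ) * poch a k * poch (a - b + 1) k * poch (a - c + 1) k *
          poch (2*a + N + 1) k) := by
      have e : (poch (2*a) k * poch (a + 1) k * poch (a + b) k * poch (a + c) k *
            poch (-(N : ℝ)) k) *
          ((k.factorial : ℝ) * poch a k * poch (a - b + 1) k * poch (a - c + 1) k *
            poch (2*a + N + 1) k)
          = (poch (2*a) k * poch a k) * (poch (a + c) k * poch (-(N:ℝ)) k) *
            (poch (a + 1) k * poch (a + b) k * (k.factorial : ℝ) *
              poch (a - b + 1) k * poch (a - c + 1) k * poch (2*a + N + 1) k) := by ring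
      rw [e]
      have hpos : 0 ≤ poch (a + 1) k * poch (a + b) k * (k.factorial : ℝ) *
          poch (a - b + 1) k * poch (a - c + 1) k * poch (2*a + N + 1) k := by positivity
      exact mul_nonneg (mul_nonneg Hpair2a hpairNc) hpos
    exact mul_nonneg (my_div_nonneg hCnum) (my_div_nonneg hEnum)
end

section
/- For 1 ≤ k ≤ N and admissible parameters, k(2a+k)·p_{k,N}(a,b,c) = [(a+b)(a+c)N/(b+c-N)] · p_{k-1,N-1}(a+1,b,c). -/
lemma poch_succ_right (a : ℝ) (k : ℕ) : poch a (k+1) = poch a k * (a + k) := by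
  simp [poch, Finset.prod_range_succ]

lemma poch_succ_left (a : ℝ) (k : ℕ) : poch a (k+1) = a * poch (a+1) k := by
  simp only [poch, Finset.prod_range_succ']
  push_cast
  rw [mul_comm]
  norm_num [add_assoc, add_comm, add_left_comm]

lemma poch_cross (a : ℝ) (k : ℕ) : poch a k * (a + k) = a * poch (a+1) k := by
  rw [← poch_succ_right, poch_succ_left]

lemma poch_factor_ne_zero {a : ℝ} {n : ℕ} (h : poch a n ≠ 0) {i : ℕ} (hi : i < n) :
    a + i ≠ 0 := by
  intro h0
  apply h
  rw [poch]
  exact Finset.prod_eq_zero (Finset.mem_range.2 hi) h0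

set_option maxHeartbeats 4000000 in
theorem wilson_step_one (k N : ℕ) (a b c : ℝ) (hk : 1 ≤ k) (hkN : k ≤ N)
    (h1 : wpden k N a b c ≠ 0) (h2 : wpden (k - 1) (N - 1) (a + 1) b c ≠ 0)
    (h3 : b + c - N ≠ 0) :
    (k : ℝ) * (2*a + k) * wp k N a b c
      = (a + b) * (a + c) * N / (b + c - N) * wp (k - 1) (N - 1) (a + 1) b c := by
  obtain ⟨m, rfl⟩ : ∃ m, k = m + 1 := ⟨k - 1, (Nat.succ_pred_eq_of_pos hk).symm⟩
  obtain ⟨M, rfl⟩ : ∃ M, N = M + 1 := ⟨N - 1, (Nat.succ_pred_eq_of_pos (hk.trans hkN)).symm⟩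
  have hmM : m ≤ M := Nat.succ_le_succ_iff.mp hkN
  simp only [Nat.add_sub_cancel] at h2 ⊢
  simp only [wpden, mul_ne_zero_iff] at h1 h2
  obtain ⟨⟨⟨⟨⟨f1, f2⟩, f3⟩, f4⟩, f5⟩, f6⟩ := h1
  obtain ⟨⟨⟨⟨⟨g1, g2⟩, g3⟩, g4⟩, g5⟩, g6⟩ := h2
  simp only [wp, wC]
  push_cast at f6 g6 h3 ⊢
  -- expansion equations
  have eWb : poch (a - b + 1) (M + 1) = (a - b + 1) * poch (a + 1 - b + 1) M := by
    rw [poch_succ_left]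
    have : a - b + 1 + 1 = a + 1 - b + 1 := by ring
    rw [this]
  have eWc : poch (a - c + 1) (M + 1) = (a - c + 1) * poch (a + 1 - c + 1) M := by
    rw [poch_succ_left]
    have : a - c + 1 + 1 = a + 1 - c + 1 := by ring
    rw [this]
  have eF1 : poch (2 * a + 1) (M + 1) = (2 * a + 1) * poch (2 * a + 2) M := by
    rw [poch_succ_left]
    have : 2 * a + 1 + 1 = 2 * a + 2 := by ring
    rw [this]
  have eF2 : poch (-b - c + 1) (M + 1) = poch (-b - c + 1) M * (-b - c + 1 + M) := by
    rw [poch_succ_right]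
  have eT1 : poch (2 * a) (m + 1) = 2 * a * poch (2 * a + 1) m := poch_succ_left _ _
  have eT2 : poch (a + 1) (m + 1) = (a + 1) * poch (a + 1 + 1) m := poch_succ_left _ _
  have eT3 : poch (a + b) (m + 1) = (a + b) * poch (a + 1 + b) m := by
    rw [poch_succ_left]
    have : a + b + 1 = a + 1 + b := by ring
    rw [this]
  have eT4 : poch (a + c) (m + 1) = (a + c) * poch (a + 1 + c) m := by
    rw [poch_succ_left]
    have : a + c + 1 = a + 1 + c := by ring
    rw [this]
  have eT5 : poch (-(↑M + 1)) (m + 1) = -(↑M + 1) * poch (-↑M) m := by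
    rw [poch_succ_left]
    have : -(↑M + 1) + 1 = -(M : ℝ) := by ring
    rw [this]
  have efac : (((m + 1).factorial : ℕ) : ℝ) = (↑m + 1) * (m.factorial : ℝ) := by
    rw [Nat.factorial_succ]; push_cast; ring
  have eF3 : poch a (m + 1) = a * poch (a + 1) m := poch_succ_left _ _
  have eF4 : poch (a - b + 1) (m + 1) = (a - b + 1) * poch (a + 1 - b + 1) m := by
    rw [poch_succ_left]
    have : a - b + 1 + 1 = a + 1 - b + 1 := by ring
    rw [this]
  have eF5 : poch (a - c + 1) (m + 1) = (a - c + 1) * poch (a + 1 - c + 1) m := by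
    rw [poch_succ_left]
    have : a - c + 1 + 1 = a + 1 - c + 1 := by ring
    rw [this]
  have eF6 : poch (2 * a + (↑M + 1) + 1) (m + 1)
      = (2 * a + (↑M + 1) + 1) * poch (2 * (a + 1) + ↑M + 1) m := by
    rw [poch_succ_left]
    have : 2 * a + (↑M + 1) + 1 + 1 = 2 * (a + 1) + ↑M + 1 := by ring
    rw [this]
  -- nonzero facts
  have hs : 2 * a + 1 + (m : ℝ) ≠ 0 := by
    have := poch_factor_ne_zero f1 (show m < M + 1 by omega)
    exact this
  rw [eF1] at f1; rw [eF2] at f2; rw [eF3] at f3; rw [eF4] at f4; rw [eF5] at f5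
  rw [eF6] at f6
  obtain ⟨h2a1, hQ2⟩ := mul_ne_zero_iff.mp f1
  obtain ⟨hg2', hMbc⟩ := mul_ne_zero_iff.mp f2
  obtain ⟨ha0, hPa1⟩ := mul_ne_zero_iff.mp f3
  obtain ⟨hab1, hPb⟩ := mul_ne_zero_iff.mp f4
  obtain ⟨hac1, hPc⟩ := mul_ne_zero_iff.mp f5
  obtain ⟨h2aM2, hP6⟩ := mul_ne_zero_iff.mp f6
  have h2a2 : 2 * a + 2 ≠ 0 := by
    rcases Nat.eq_zero_or_pos M with hM | hM
    · subst hM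
      intro h
      apply h2aM2
      push_cast
      linarith
    · have h := poch_factor_ne_zero hQ2 (i := 0) hM
      simpa using h
  have eP1 : poch (2 * a + 1) m = (2 * a + 1) * poch (2 * (a + 1)) m / (2 * a + 1 + m) := by
    rw [eq_div_iff hs]
    have h := poch_cross (2 * a + 1) m
    have harg : 2 * a + 1 + 1 = 2 * (a + 1) := by ring
    rw [harg] at h
    exact h
  have eG1 : poch (2 * (a + 1) + 1) M = poch (2 * a + 2) M * (2 * a + 2 + M) / (2 * a + 2) := by
    rw [eq_div_iff h2a2]
    have h := poch_cross (2 * a + 2) M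
    have harg : 2 * a + 2 + 1 = 2 * (a + 1) + 1 := by ring
    rw [harg] at h
    linear_combination -h
  have h2aM2' : 2 * a + 2 + (M : ℝ) ≠ 0 := by
    intro h; exact h2aM2 (by linarith)
  have hfm : ((m.factorial : ℕ) : ℝ) ≠ 0 := by positivity
  have hm1 : (m : ℝ) + 1 ≠ 0 := by positivity
  rw [eWb, eWc, eF1, eF2, eT1, eT2, eT3, eT4, eT5, efac, eF3, eF4, eF5, eF6, eP1, eG1]
  have hQ2' : poch (2 * (a + 1)) M ≠ 0 := by
    rw [show 2 * (a + 1) = 2 * a + 2 by ring]; exact hQ2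
  have h2aM2'' : 2 * (a + 1) + (M : ℝ) ≠ 0 := by
    rw [show 2 * (a + 1) = 2 * a + 2 by ring]; exact h2aM2'
  field_simp
  ring
end
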